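/- Let (ρₙ)ₙ∈ℤ be positive real numbers, (zₙ)ₙ∈ℤ real numbers and (θₘ)ₘ∈ℤ real numbers, and define the discrete surface of revolution f : ℤ² → ℝ³ by f(m,n) := (ρₙ cos θₘ, ρₙ sin θₘ, zₙ). Then for every (m,n) the four diagonal neighbours f(m−1,n−1), f(m+1,n−1), f(m+1,n+1), f(m−1,n+1) are concyclic. (This is the symmetry property by which discrete surfaces of revolution satisfy the discrete isothermic 5-point-sphere condition; it is the converse direction of the discrete Vessiot theorem for surfaces of revolution.) -/

import Mathlib

noncomputable section

abbrev E3 : Type := EuclideanSpace ℝ (Fin 3)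

/-- A set of points is concyclic if the points lie on a common circle or a common line. -/
def ConcyclicOrCollinear (s : Set E3) : Prop :=
  EuclideanGeometry.Concyclic s ∨ Collinear ℝ s

private def e3 (v : Fin 3 → ℝ) : E3 := (WithLp.equiv 2 (Fin 3 → ℝ)).symm v

private lemma dist3 (v w : Fin 3 → ℝ) :
    dist (e3 v) (e3 w)
      = Real.sqrt ((v 0 - w 0)^2 + (v 1 - w 1)^2 + (v 2 - w 2)^2) := by
  rw [e3, e3, EuclideanSpace.dist_eq, Fin.sum_univ_three]
  simp [Real.dist_eq, sq_abs]

private lemma e3_apply (v : Fin 3 → ℝ) (i : Fin 3) : e3 v i = v i := rfl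

private lemma aux (r s z1 z2 ca sa cb sb : ℝ) (hr0 : 0 < r) (hs0 : 0 < s)
    (h1 : sa^2 + ca^2 = 1) (h2 : sb^2 + cb^2 = 1) :
    ConcyclicOrCollinear
      {e3 ![r * ca, r * sa, z1], e3 ![r * cb, r * sb, z1],
       e3 ![s * cb, s * sb, z2], e3 ![s * ca, s * sa, z2]} := by
  set S := sa * cb - ca * sb with hS'
  by_cases hdeg : z1 = z2 ∧ S = 0
  · obtain ⟨hz, hS⟩ := hdeg
    subst hz
    right
    rw [collinear_iff_exists_forall_eq_smul_vadd]
    refine ⟨e3 ![0, 0, z1], e3 ![ca, sa, 0], ?_⟩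
    intro p hp
    have key : ∀ x y : ℝ, x * sa - y * ca = 0 →
        e3 ![x, y, z1] = (x * ca + y * sa) • e3 ![ca, sa, 0] +ᵥ e3 ![0, 0, z1] := by
      intro x y hxy
      have hrfl : (x * ca + y * sa) • e3 ![ca, sa, 0] +ᵥ e3 ![0, 0, z1]
          = e3 ![(x * ca + y * sa) * ca + 0, (x * ca + y * sa) * sa + 0,
              (x * ca + y * sa) * 0 + z1] := by
        ext i
        show ((x * ca + y * sa) • (![ca, sa, 0] : Fin 3 → ℝ) + ![0, 0, z1]) i = _
        fin_cases i <;> rfl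
      rw [hrfl]
      have hv : ![x, y, z1] = ![(x * ca + y * sa) * ca + 0, (x * ca + y * sa) * sa + 0,
          (x * ca + y * sa) * 0 + z1] := by
        funext i
        fin_cases i
        · show x = (x * ca + y * sa) * ca + 0
          linear_combination (-x) * h1 + sa * hxy
        · show y = (x * ca + y * sa) * sa + 0
          linear_combination (-y) * h1 - ca * hxy
        · show z1 = (x * ca + y * sa) * 0 + z1
          ring
      rw [e3, hv, e3]
    rcases hp with h | h | h | h <;> subst h
    · exact ⟨r * ca * ca + r * sa * sa, key _ _ (by ring)⟩
    · exact ⟨r * cb * ca + r * sb * sa, key _ _ (by linear_combination r * hS)⟩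
    · exact ⟨s * cb * ca + s * sb * sa, key _ _ (by linear_combination s * hS)⟩
    · exact ⟨s * ca * ca + s * sa * sa, key _ _ (by ring)⟩
  · left
    constructor
    · push_neg at hdeg
      by_cases hz : z1 = z2
      · have hS : S ≠ 0 := hdeg hz
        subst hz
        obtain ⟨t, htS⟩ : ∃ t : ℝ, 2 * t * S = r + s :=
          ⟨(r + s) / (2 * S), by field_simp⟩
        refine ⟨e3 ![t * (sa - sb), t * (cb - ca), z1],
          Real.sqrt ((r * ca - t * (sa - sb))^2 + (r * sa - t * (cb - ca))^2 + (z1 - z1)^2), ?_⟩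
        intro p hp
        rcases hp with h | h | h | h <;> subst h <;> rw [dist3] <;>
          refine congrArg Real.sqrt ?_ <;>
          simp only [Matrix.cons_val_zero, Matrix.cons_val_one, Matrix.head_cons,
            Matrix.cons_val_two, Matrix.tail_cons]
        · linear_combination r^2 * h2 - r^2 * h1
        · linear_combination s^2 * h2 - r^2 * h1 - (s - r) * htS
        · linear_combination (s^2 - r^2) * h1 - (s - r) * htS
      · have hzz : z1 - z2 ≠ 0 := sub_ne_zero.mpr hz
        obtain ⟨c, hcz⟩ : ∃ c : ℝ, 2 * c * (z1 - z2) = r^2 - s^2 + z1^2 - z2^2 :=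
          ⟨(r^2 - s^2 + z1^2 - z2^2) / (2 * (z1 - z2)), by field_simp⟩
        refine ⟨e3 ![0, 0, c],
          Real.sqrt ((r * ca - 0)^2 + (r * sa - 0)^2 + (z1 - c)^2), ?_⟩
        intro p hp
        rcases hp with h | h | h | h <;> subst h <;> rw [dist3] <;>
          refine congrArg Real.sqrt ?_ <;>
          simp only [Matrix.cons_val_zero, Matrix.cons_val_one, Matrix.head_cons,
            Matrix.cons_val_two, Matrix.tail_cons]
        · linear_combination r^2 * h2 - r^2 * h1
        · linear_combination s^2 * h2 - r^2 * h1 + hcz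
        · linear_combination (s^2 - r^2) * h1 + hcz
    · have h3 : e3 ![s * cb, s * sb, z2]
          = (s / r) • (e3 ![r * cb, r * sb, z1] -ᵥ e3 ![r * ca, r * sa, z1])
            +ᵥ e3 ![s * ca, s * sa, z2] := by
        have hr' : r ≠ 0 := ne_of_gt hr0
        have hrfl : (s / r) • (e3 ![r * cb, r * sb, z1] -ᵥ e3 ![r * ca, r * sa, z1])
            +ᵥ e3 ![s * ca, s * sa, z2]
            = e3 ![(s / r) * (r * cb - r * ca) + s * ca, (s / r) * (r * sb - r * sa) + s * sa,
                (s / r) * (z1 - z1) + z2] := by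
          ext i
          show ((s / r) • ((![r * cb, r * sb, z1] : Fin 3 → ℝ) - ![r * ca, r * sa, z1])
              + ![s * ca, s * sa, z2]) i = _
          fin_cases i <;> rfl
        rw [hrfl]
        have hv : ![s * cb, s * sb, z2] = ![(s / r) * (r * cb - r * ca) + s * ca,
            (s / r) * (r * sb - r * sa) + s * sa, (s / r) * (z1 - z1) + z2] := by
          funext i
          fin_cases i
          · show s * cb = (s / r) * (r * cb - r * ca) + s * ca
            field_simp
            ring
          · show s * sb = (s / r) * (r * sb - r * sa) + s * sa
            field_simp
            ring
          · show z2 = (s / r) * (z1 - z1) + z2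
            ring
        rw [e3, hv, e3]
      have hmem : e3 ![s * cb, s * sb, z2] ∈ affineSpan ℝ
          ({e3 ![r * ca, r * sa, z1], e3 ![r * cb, r * sb, z1],
            e3 ![s * ca, s * sa, z2]} : Set E3) := by
        rw [h3]
        exact AffineSubspace.smul_vsub_vadd_mem _ _
          (mem_affineSpan ℝ (by simp)) (mem_affineSpan ℝ (by simp)) (mem_affineSpan ℝ (by simp))
      have hset : ({e3 ![r * ca, r * sa, z1], e3 ![r * cb, r * sb, z1],
            e3 ![s * cb, s * sb, z2], e3 ![s * ca, s * sa, z2]} : Set E3)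
          = insert (e3 ![s * cb, s * sb, z2])
            {e3 ![r * ca, r * sa, z1], e3 ![r * cb, r * sb, z1], e3 ![s * ca, s * sa, z2]} := by
        ext x; simp; tauto
      rw [hset, coplanar_insert_iff_of_mem_affineSpan hmem]
      apply coplanar_triple


/-- For a discrete surface of revolution
`f(m,n) = (ρₙ cos θₘ, ρₙ sin θₘ, zₙ)` the four diagonal neighbours of every vertex are
concircular. -/
theorem surface_of_revolution_diagonals_concircular
    (ρ : ℤ → ℝ) (hρ : ∀ n : ℤ, 0 < ρ n) (z θ : ℤ → ℝ)
    (f : ℤ × ℤ → E3)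
    (hf : ∀ m n : ℤ, f (m, n) = (WithLp.equiv 2 (Fin 3 → ℝ)).symm
      ![ρ n * Real.cos (θ m), ρ n * Real.sin (θ m), z n]) :
    ∀ m n : ℤ, ConcyclicOrCollinear
      {f (m - 1, n - 1), f (m + 1, n - 1), f (m + 1, n + 1), f (m - 1, n + 1)} := by
  intro m n
  rw [hf (m - 1) (n - 1), hf (m + 1) (n - 1), hf (m + 1) (n + 1), hf (m - 1) (n + 1)]
  exact aux (ρ (n - 1)) (ρ (n + 1)) (z (n - 1)) (z (n + 1))
    (Real.cos (θ (m - 1))) (Real.sin (θ (m - 1))) (Real.cos (θ (m + 1))) (Real.sin (θ (m + 1)))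
    (hρ _) (hρ _) (Real.sin_sq_add_cos_sq _) (Real.sin_sq_add_cos_sq _)
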